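/- Let Z be a positive semidefinite matrix with ⟨Z, X*⟩ = 0, where X* = (1/k) Σ_l (k·1_{C_l} - e)(k·1_{C_l} - e)^T. Then the range of Z is contained in J = {x : ⟨x, 1_{C_1}⟩ = ... = ⟨x, 1_{C_k}⟩}, and moreover rank(X*) + rank(Z) = |V| if and only if range(Z) = J. -/

import Mathlib

set_option linter.unusedSectionVars false
set_option linter.unusedVariables false

open Matrix

/-- Indicator function of a finite set. -/
def indFun {V : Type*} [DecidableEq V] (s : Finset V) : V → ℝ :=
  fun v => if v ∈ s then (1 : ℝ) else 0

/-- The vector `k·1_{C_l} − e`. -/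
def uVec {V : Type*} [DecidableEq V] (k : ℕ) (s : Finset V) : V → ℝ :=
  fun v => (k : ℝ) * indFun s v - 1

/-- The matrix `X* = (1/k) Σ_l (k·1_{C_l} − e)(k·1_{C_l} − e)ᵀ`. -/
noncomputable def Xstar {V : Type*} [Fintype V] [DecidableEq V] {k : ℕ}
    (C : Fin k → Finset V) : Matrix V V ℝ :=
  (k : ℝ)⁻¹ • ∑ l : Fin k, Matrix.vecMulVec (uVec k (C l)) (uVec k (C l))

section Aux

variable {V : Type*} [Fintype V] [DecidableEq V]

lemma aux_dot_symm (Z : Matrix V V ℝ) (hs : Zᵀ = Z) (u y : V → ℝ) :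
    (Z *ᵥ y) ⬝ᵥ u = y ⬝ᵥ (Z *ᵥ u) := by
  rw [dotProduct_comm, dotProduct_mulVec, ← mulVec_transpose, hs, dotProduct_comm]

lemma aux_vecMulVec_mulVec (u v x : V → ℝ) : (vecMulVec u v) *ᵥ x = (v ⬝ᵥ x) • u := by
  ext i
  simp only [mulVec, vecMulVec_apply, dotProduct, Pi.smul_apply, smul_eq_mul, Finset.sum_mul]
  congr 1; ext j; ring

lemma aux_trace_mul_vecMulVec (Z : Matrix V V ℝ) (u : V → ℝ) :
    (Z * vecMulVec u u).trace = u ⬝ᵥ (Z *ᵥ u) := by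
  simp only [Matrix.trace, Matrix.diag_apply, Matrix.mul_apply, vecMulVec_apply, dotProduct,
    mulVec, Finset.mul_sum]
  congr 1; ext i; congr 1; ext j; ring

variable {k : ℕ} (C : Fin k → Finset V)

lemma aux_Xstar_transpose : (Xstar C)ᵀ = Xstar C := by
  unfold Xstar
  rw [transpose_smul, transpose_sum]
  congr 1
  refine Finset.sum_congr rfl fun l _ => ?_
  ext i j
  simp [vecMulVec_apply, mul_comm]

lemma aux_sum_mulVec {k : ℕ} (M : Fin k → Matrix V V ℝ) (x : V → ℝ) :
    (∑ l, M l) *ᵥ x = ∑ l, M l *ᵥ x := by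
  ext i
  simp only [mulVec, dotProduct, Finset.sum_apply, Matrix.sum_apply, Finset.sum_mul]
  rw [Finset.sum_comm]

lemma aux_dot_sum {k : ℕ} (x : V → ℝ) (w : Fin k → V → ℝ) :
    x ⬝ᵥ ∑ l, w l = ∑ l, x ⬝ᵥ w l := by
  simp only [dotProduct, Finset.sum_apply, Finset.mul_sum]
  rw [Finset.sum_comm]

lemma aux_Xstar_mulVec (x : V → ℝ) :
    (Xstar C) *ᵥ x = (k : ℝ)⁻¹ • ∑ l, (uVec k (C l) ⬝ᵥ x) • uVec k (C l) := by
  unfold Xstar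
  rw [smul_mulVec, aux_sum_mulVec]
  congr 1
  exact Finset.sum_congr rfl fun l _ => aux_vecMulVec_mulVec _ _ _

lemma aux_udot (l : Fin k) (x : V → ℝ) :
    uVec k (C l) ⬝ᵥ x = (k : ℝ) * (x ⬝ᵥ indFun (C l)) - ∑ v, x v := by
  simp only [uVec, dotProduct, Finset.mul_sum, ← Finset.sum_sub_distrib]
  congr 1; ext v; ring

lemma aux_sum_ind (hdisj : ∀ i j : Fin k, i ≠ j → Disjoint (C i) (C j))
    (hcover : ∀ v : V, ∃ l : Fin k, v ∈ C l) (v : V) :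
    ∑ l, indFun (C l) v = 1 := by
  obtain ⟨l0, hl0⟩ := hcover v
  rw [Finset.sum_eq_single l0]
  · simp [indFun, hl0]
  · intro b _ hb
    have : v ∉ C b := fun hmem => (Finset.disjoint_left.mp (hdisj b l0 hb) hmem) hl0
    simp [indFun, this]
  · simp

lemma aux_sum_dot (hdisj : ∀ i j : Fin k, i ≠ j → Disjoint (C i) (C j))
    (hcover : ∀ v : V, ∃ l : Fin k, v ∈ C l) (x : V → ℝ) :
    ∑ l, x ⬝ᵥ indFun (C l) = ∑ v, x v := by
  simp only [dotProduct]
  rw [Finset.sum_comm]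
  refine Finset.sum_congr rfl fun v _ => ?_
  rw [← Finset.mul_sum, aux_sum_ind C hdisj hcover, mul_one]

lemma aux_mem_J_iff (hk : 0 < k)
    (hdisj : ∀ i j : Fin k, i ≠ j → Disjoint (C i) (C j))
    (hcover : ∀ v : V, ∃ l : Fin k, v ∈ C l) (x : V → ℝ) :
    (∀ l : Fin k, x ⬝ᵥ indFun (C l) = x ⬝ᵥ indFun (C ⟨0, hk⟩)) ↔
      (∀ l : Fin k, uVec k (C l) ⬝ᵥ x = 0) := by
  have hk' : (k : ℝ) ≠ 0 := Nat.cast_ne_zero.mpr hk.ne'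
  constructor
  · intro h l
    have hsum : ∑ v, x v = (k : ℝ) * (x ⬝ᵥ indFun (C ⟨0, hk⟩)) := by
      rw [← aux_sum_dot C hdisj hcover x]
      simp only [h, Finset.sum_const, Finset.card_univ, Fintype.card_fin, nsmul_eq_mul]
    rw [aux_udot, h l, hsum, sub_self]
  · intro h l
    have h1 := aux_udot C l x
    have h2 := aux_udot C ⟨0, hk⟩ x
    rw [h l] at h1
    rw [h ⟨0, hk⟩] at h2
    have hkk : (k : ℝ) * (x ⬝ᵥ indFun (C l)) = (k : ℝ) * (x ⬝ᵥ indFun (C ⟨0, hk⟩)) := by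
      linarith
    exact mul_left_cancel₀ hk' hkk

lemma aux_Xstar_mulVec_zero_iff (hk : 0 < k) (x : V → ℝ) :
    (Xstar C) *ᵥ x = 0 ↔ ∀ l : Fin k, uVec k (C l) ⬝ᵥ x = 0 := by
  constructor
  · intro h
    have hq : x ⬝ᵥ ((Xstar C) *ᵥ x) = 0 := by rw [h, dotProduct_zero]
    rw [aux_Xstar_mulVec] at hq
    have hq' : (k : ℝ)⁻¹ * ∑ l, (uVec k (C l) ⬝ᵥ x) ^ 2 = 0 := by
      rw [← hq, dotProduct_smul]
      congr 1
      rw [aux_dot_sum]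
      refine Finset.sum_congr rfl fun l _ => ?_
      rw [dotProduct_smul, smul_eq_mul, dotProduct_comm, sq]
    have hk' : (k : ℝ)⁻¹ ≠ 0 := by positivity
    have hsum : ∑ l, (uVec k (C l) ⬝ᵥ x) ^ 2 = 0 := by
      rcases mul_eq_zero.mp hq' with h' | h'
      · exact absurd h' hk'
      · exact h'
    intro l
    have := (Finset.sum_eq_zero_iff_of_nonneg (fun l _ => sq_nonneg _)).mp hsum l
      (Finset.mem_univ l)
    exact pow_eq_zero_iff (n := 2) (by norm_num) |>.mp this
  · intro h
    rw [aux_Xstar_mulVec]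
    simp [h]

end Aux

theorem stmt3 {V : Type*} [Fintype V] [DecidableEq V] {k : ℕ} (hk : 0 < k)
    (C : Fin k → Finset V)
    (hdisj : ∀ i j : Fin k, i ≠ j → Disjoint (C i) (C j))
    (hcover : ∀ v : V, ∃ l : Fin k, v ∈ C l)
    (hne : ∀ l : Fin k, (C l).Nonempty)
    (Z : Matrix V V ℝ) (hZ : Z.PosSemidef)
    (horth : (Z * (Xstar C)ᵀ).trace = 0) :
    (Set.range (Z.mulVec) ⊆
        {x : V → ℝ | ∀ l : Fin k, x ⬝ᵥ indFun (C l) = x ⬝ᵥ indFun (C ⟨0, hk⟩)})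
    ∧ ((Xstar C).rank + Z.rank = Fintype.card V ↔
        Set.range (Z.mulVec) =
          {x : V → ℝ | ∀ l : Fin k, x ⬝ᵥ indFun (C l) = x ⬝ᵥ indFun (C ⟨0, hk⟩)}) := by
  have hZsym : Zᵀ = Z := by have h := hZ.1; simp at h; exact h
  -- Z kills each uVec
  have hzero : ∀ l : Fin k, Z *ᵥ uVec k (C l) = 0 := by
    have htr : (Z * (Xstar C)ᵀ).trace
        = (k : ℝ)⁻¹ * ∑ l, uVec k (C l) ⬝ᵥ (Z *ᵥ uVec k (C l)) := by
      rw [aux_Xstar_transpose]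
      unfold Xstar
      rw [Matrix.mul_smul, Matrix.mul_sum, trace_smul, trace_sum, smul_eq_mul]
      congr 1
      exact Finset.sum_congr rfl fun l _ => aux_trace_mul_vecMulVec Z _
    have hk' : (k : ℝ)⁻¹ ≠ 0 := by positivity
    have hsum : ∑ l, uVec k (C l) ⬝ᵥ (Z *ᵥ uVec k (C l)) = 0 := by
      rw [htr] at horth
      rcases mul_eq_zero.mp horth with h' | h'
      · exact absurd h' hk'
      · exact h'
    intro l
    have hl := (Finset.sum_eq_zero_iff_of_nonneg
      (fun l _ => by simpa using hZ.dotProduct_mulVec_nonneg (uVec k (C l)))).mp hsum l (Finset.mem_univ l)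
    exact (hZ.dotProduct_mulVec_zero_iff _).mp (by simpa using hl)
  have hrangeJ : ∀ y : V → ℝ, ∀ l : Fin k, uVec k (C l) ⬝ᵥ (Z *ᵥ y) = 0 := by
    intro y l
    rw [dotProduct_comm, aux_dot_symm Z hZsym, hzero l, dotProduct_zero]
  have part1 : Set.range (Z.mulVec) ⊆
      {x : V → ℝ | ∀ l : Fin k, x ⬝ᵥ indFun (C l) = x ⬝ᵥ indFun (C ⟨0, hk⟩)} := by
    rintro _ ⟨y, rfl⟩
    exact (aux_mem_J_iff C hk hdisj hcover _).mpr (hrangeJ y)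
  refine ⟨part1, ?_⟩
  have hJker : {x : V → ℝ | ∀ l : Fin k, x ⬝ᵥ indFun (C l) = x ⬝ᵥ indFun (C ⟨0, hk⟩)}
      = ↑(LinearMap.ker (Xstar C).mulVecLin) := by
    ext x
    simp only [Set.mem_setOf_eq, SetLike.mem_coe, LinearMap.mem_ker, mulVecLin_apply]
    rw [aux_Xstar_mulVec_zero_iff C hk, aux_mem_J_iff C hk hdisj hcover]
  have hsetrange : Set.range Z.mulVec = ↑(LinearMap.range Z.mulVecLin) := by
    rw [LinearMap.coe_range]; rfl
  have hle : LinearMap.range Z.mulVecLin ≤ LinearMap.ker (Xstar C).mulVecLin := by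
    rintro _ ⟨y, rfl⟩
    simp only [LinearMap.mem_ker, mulVecLin_apply]
    exact (aux_Xstar_mulVec_zero_iff C hk _).mpr (hrangeJ y)
  have hrn : (Xstar C).rank
      + Module.finrank ℝ (LinearMap.ker (Xstar C).mulVecLin) = Fintype.card V := by
    rw [show (Xstar C).rank = Module.finrank ℝ (LinearMap.range (Xstar C).mulVecLin) from rfl,
      LinearMap.finrank_range_add_finrank_ker, Module.finrank_fintype_fun_eq_card]
  have hZr : Z.rank = Module.finrank ℝ (LinearMap.range Z.mulVecLin) := rfl
  rw [hsetrange, hJker]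
  constructor
  · intro h
    have heq : Module.finrank ℝ (LinearMap.range Z.mulVecLin)
        = Module.finrank ℝ (LinearMap.ker (Xstar C).mulVecLin) := by omega
    exact congrArg _ (Submodule.eq_of_le_of_finrank_eq hle heq)
  · intro h
    have heq : LinearMap.range Z.mulVecLin = LinearMap.ker (Xstar C).mulVecLin :=
      SetLike.coe_injective h
    rw [hZr, heq]
    exact hrn
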